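/- arXiv:1310.5747 — 2 statements merged into one kernel-verified Lean document; each statement's English description precedes it below -/
import Mathlib

section
/- Let D± be a canonical mixed Boolean automaton double-cycle with left cycle (negative) of size n and right cycle (positive) of size m: f_c(x) = (¬x^ℓ_{n-1}) ∧ x^r_{m-1}, and every other automaton copies its predecessor. Then for every configuration x there is a sequence of at most 2n+m-2 asynchronous single-automaton updates transforming x into (0^n, 0^m), and (0^n, 0^m) is a stable configuration. -/
/-- A configuration of a Boolean automaton double-cycle with cycles of sizes `n`
and `m`: the shared automaton `c` is index 0 of both cycles (so valid
configurations satisfy `x.1 0 = x.2 0`). -/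
abbrev Cfg (n m : ℕ) := (Fin n → Bool) × (Fin m → Bool)

/-- One asynchronous single-automaton update in a double-cycle whose shared
automaton `c` computes `fc`; every non-shared automaton copies its predecessor. -/
inductive Step {n m : ℕ} (fc : Cfg n m → Bool) : Cfg n m → Cfg n m → Prop
  | left (x : Cfg n m) (i : Fin n) (hi : 1 ≤ i.val) :
      Step fc x (Function.update x.1 i (x.1 ⟨i.val - 1, by have := i.isLt; omega⟩), x.2)
  | right (x : Cfg n m) (j : Fin m) (hj : 1 ≤ j.val) :
      Step fc x (x.1, Function.update x.2 j (x.2 ⟨j.val - 1, by have := j.isLt; omega⟩))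
  | center (x : Cfg n m) (i : Fin n) (j : Fin m) (hi : i.val = 0) (hj : j.val = 0) :
      Step fc x (Function.update x.1 i (fc x), Function.update x.2 j (fc x))

/-- `Steps fc k x y`: configuration `y` is obtained from `x` by exactly `k`
asynchronous single-automaton updates. -/
def Steps {n m : ℕ} (fc : Cfg n m → Bool) : ℕ → Cfg n m → Cfg n m → Prop
  | 0, x, y => x = y
  | k + 1, x, y => ∃ z, Step fc x z ∧ Steps fc k z y

lemma steps_trans {n m : ℕ} {fc : Cfg n m → Bool} :
    ∀ (a : ℕ) {b : ℕ} {x y z : Cfg n m},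
      Steps fc a x y → Steps fc b y z → Steps fc (a + b) x z := by
  intro a
  induction a with
  | zero =>
      intro b x y z h1 h2
      have : x = y := h1
      subst this
      simpa using h2
  | succ a ih =>
      intro b x y z h1 h2
      obtain ⟨w, hw, hws⟩ := h1
      have : Steps fc ((a + b) + 1) x z := ⟨w, hw, ih hws h2⟩
      simpa [Nat.succ_add] using this

lemma fillLeft {n m : ℕ} (fc : Cfg n m → Bool) (b : Bool) :
    ∀ d, d < n → ∀ x : Cfg n m, (∀ i : Fin n, i.val + d < n → x.1 i = b) →
      Steps fc d x ((fun _ => b), x.2) := by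
  intro d
  induction d with
  | zero =>
      intro _ x hx
      have : x.1 = fun _ => b := funext fun i => hx i (by omega)
      show x = _
      exact Prod.ext this rfl
  | succ d ih =>
      intro hd x hx
      have hpn : n - d - 1 < n := by omega
      set p : Fin n := ⟨n - d - 1, hpn⟩ with hp
      have hp1 : 1 ≤ p.val := by simp only [hp]; omega
      refine ⟨(Function.update x.1 p (x.1 ⟨p.val - 1, by omega⟩), x.2),
        Step.left x p hp1, ?_⟩
      have hpred : x.1 ⟨p.val - 1, by omega⟩ = b := by
        apply hx
        simp only [hp]
        omega
      have key := ih (by omega)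
        (Function.update x.1 p (x.1 ⟨p.val - 1, by omega⟩), x.2) ?_
      · exact key
      · intro i hi
        by_cases h : i = p
        · subst h
          simpa using hpred
        · have he : (Function.update x.1 p (x.1 ⟨p.val - 1, by omega⟩), x.2).1 i
              = x.1 i := Function.update_of_ne h _ _
          rw [he]
          apply hx
          have : i.val ≠ p.val := fun hc => h (Fin.ext hc)
          simp only [hp] at this
          omega

lemma fillRight {n m : ℕ} (fc : Cfg n m → Bool) (b : Bool) :
    ∀ d, d < m → ∀ x : Cfg n m, (∀ j : Fin m, j.val + d < m → x.2 j = b) →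
      Steps fc d x (x.1, (fun _ => b)) := by
  intro d
  induction d with
  | zero =>
      intro _ x hx
      have : x.2 = fun _ => b := funext fun j => hx j (by omega)
      show x = _
      exact Prod.ext rfl this
  | succ d ih =>
      intro hd x hx
      have hpn : m - d - 1 < m := by omega
      set p : Fin m := ⟨m - d - 1, hpn⟩ with hp
      have hp1 : 1 ≤ p.val := by simp only [hp]; omega
      refine ⟨(x.1, Function.update x.2 p (x.2 ⟨p.val - 1, by omega⟩)),
        Step.right x p hp1, ?_⟩
      have hpred : x.2 ⟨p.val - 1, by omega⟩ = b := by
        apply hx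
        simp only [hp]
        omega
      have key := ih (by omega)
        (x.1, Function.update x.2 p (x.2 ⟨p.val - 1, by omega⟩)) ?_
      · exact key
      · intro j hj
        by_cases h : j = p
        · subst h
          simpa using hpred
        · have he : (x.1, Function.update x.2 p (x.2 ⟨p.val - 1, by omega⟩)).2 j
              = x.2 j := Function.update_of_ne h _ _
          rw [he]
          apply hx
          have : j.val ≠ p.val := fun hc => h (Fin.ext hc)
          simp only [hp] at this
          omega

/-- In a canonical mixed double-cycle (f_c(x) = ¬x^ℓ_{n-1} ∧ x^r_{m-1}), every
configuration reaches the all-zeros configuration in at most 2n+m-2 updates,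
and the all-zeros configuration is stable. -/
theorem stmt9 (n m : ℕ) (hn : 0 < n) (hm : 0 < m) :
    (∀ x : Cfg n m, x.1 ⟨0, hn⟩ = x.2 ⟨0, hm⟩ →
      ∃ k ≤ 2 * n + m - 2,
        Steps (fun y : Cfg n m => !(y.1 ⟨n - 1, by omega⟩) && y.2 ⟨m - 1, by omega⟩)
          k x ((fun _ => false, fun _ => false) : Cfg n m)) ∧
    (∀ y : Cfg n m,
      Step (fun z : Cfg n m => !(z.1 ⟨n - 1, by omega⟩) && z.2 ⟨m - 1, by omega⟩)
        ((fun _ => false, fun _ => false) : Cfg n m) y →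
      y = ((fun _ => false, fun _ => false) : Cfg n m)) := by
  set fc : Cfg n m → Bool :=
    fun y : Cfg n m => !(y.1 ⟨n - 1, by omega⟩) && y.2 ⟨m - 1, by omega⟩ with hfc
  constructor
  · intro x hx
    by_cases hc : x.1 ⟨0, hn⟩ = false
    · -- center is false: fill right then left with false
      have s1 : Steps fc (m - 1) x (x.1, fun _ => false) := by
        apply fillRight fc false (m - 1) (by omega)
        intro j hj
        have hj0 : j.val = 0 := by omega
        have : j = ⟨0, hm⟩ := Fin.ext hj0
        rw [this, ← hx, hc]
      have s2 : Steps fc (n - 1) (x.1, (fun _ => false : Fin m → Bool))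
          ((fun _ => false), (fun _ => false)) := by
        apply fillLeft fc false (n - 1) (by omega)
        intro i hi
        have hi0 : i.val = 0 := by omega
        have : i = ⟨0, hn⟩ := Fin.ext hi0
        rw [this]; exact hc
      exact ⟨(m - 1) + (n - 1), by omega, steps_trans _ s1 s2⟩
    · have hc' : x.1 ⟨0, hn⟩ = true := by
        cases h : x.1 ⟨0, hn⟩ <;> simp_all
      -- fill left with true
      have s1 : Steps fc (n - 1) x ((fun _ => true), x.2) := by
        apply fillLeft fc true (n - 1) (by omega)
        intro i hi
        have hi0 : i.val = 0 := by omega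
        have : i = ⟨0, hn⟩ := Fin.ext hi0
        rw [this]; exact hc'
      -- center update: fc of (const true, x.2) is false
      set y1 : Cfg n m := ((fun _ => true), x.2) with hy1
      have hfcy : fc y1 = false := by simp [hfc, hy1]
      set z : Cfg n m :=
        (Function.update y1.1 ⟨0, hn⟩ false, Function.update y1.2 ⟨0, hm⟩ false)
        with hz
      have s2 : Steps fc 1 y1 z := by
        refine ⟨z, ?_, rfl⟩
        have h := Step.center (fc := fc) y1 ⟨0, hn⟩ ⟨0, hm⟩ rfl rfl
        rwa [hfcy] at h
      -- fill right with false
      have s3 : Steps fc (m - 1) z (z.1, fun _ => false) := by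
        apply fillRight fc false (m - 1) (by omega)
        intro j hj
        have hj0 : j.val = 0 := by omega
        have : j = ⟨0, hm⟩ := Fin.ext hj0
        rw [this, hz]
        simp
      -- fill left with false
      have s4 : Steps fc (n - 1) (z.1, (fun _ => false : Fin m → Bool))
          ((fun _ => false), (fun _ => false)) := by
        apply fillLeft fc false (n - 1) (by omega)
        intro i hi
        have hi0 : i.val = 0 := by omega
        have : i = ⟨0, hn⟩ := Fin.ext hi0
        rw [this, hz]
        simp
      refine ⟨(n - 1) + (1 + ((m - 1) + (n - 1))), by omega, ?_⟩
      exact steps_trans _ s1 (steps_trans _ s2 (steps_trans _ s3 s4))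
  · intro y h
    cases h with
    | left i hi =>
        refine Prod.ext ?_ rfl
        funext a
        simp [Function.update_apply]
    | right j hj =>
        refine Prod.ext rfl ?_
        funext a
        simp [Function.update_apply]
    | center i j hi hj =>
        have : fc ((fun _ => false, fun _ => false) : Cfg n m) = false := by
          simp [hfc]
        refine Prod.ext ?_ ?_ <;> funext a <;>
          simp [this, Function.update_apply]
end

section
/- Let D- be a canonical negative Boolean automaton double-cycle with both cycle sizes n and m even, n,m ≥ 2. Then every configuration is reachable from every other configuration by a sequence of asynchronous single-automaton updates; consequently, the asynchronous transition graph of D- consists of a single terminal strongly connected component containing all 2^{n+m-1} configurations. -/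
namespace DCaux

variable {n m : ℕ}

lemma fin_congr {α : Sort*} (f : Fin n → α) {a b : ℕ} (ha : a < n) (hb : b < n) (h : a = b) :
    f ⟨a, ha⟩ = f ⟨b, hb⟩ := by subst h; rfl

lemma fin_congr' {α : Sort*} (f : Fin n → α) {a : ℕ} (ha : a < n) (i : Fin n) (h : i.val = a) :
    f ⟨a, ha⟩ = f i := by rw [show (⟨a, ha⟩ : Fin n) = i from Fin.ext h.symm]

def FC (hn : 2 ≤ n) (hm : 2 ≤ m) : Cfg n m → Bool :=
  fun z => !(z.1 ⟨n - 1, by omega⟩) && !(z.2 ⟨m - 1, by omega⟩)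

section
variable (hn : 2 ≤ n) (hm : 2 ≤ m)

abbrev Reach (x y : Cfg n m) : Prop := Relation.ReflTransGen (Step (FC hn hm)) x y

lemma step_left_to (x : Cfg n m) (i : Fin n) (hi : 1 ≤ i.val) (y : Cfg n m)
    (hy : y.2 = x.2)
    (hy1 : y.1 = Function.update x.1 i (x.1 ⟨i.val - 1, by have := i.isLt; omega⟩)) :
    Step (FC hn hm) x y := by
  have : y = (Function.update x.1 i (x.1 ⟨i.val - 1, by have := i.isLt; omega⟩), x.2) :=
    Prod.ext hy1 hy
  rw [this]; exact Step.left x i hi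

lemma step_right_to (x : Cfg n m) (j : Fin m) (hj : 1 ≤ j.val) (y : Cfg n m)
    (hy : y.1 = x.1)
    (hy2 : y.2 = Function.update x.2 j (x.2 ⟨j.val - 1, by have := j.isLt; omega⟩)) :
    Step (FC hn hm) x y := by
  have : y = (x.1, Function.update x.2 j (x.2 ⟨j.val - 1, by have := j.isLt; omega⟩)) :=
    Prod.ext hy hy2
  rw [this]; exact Step.right x j hj

lemma step_center_to (x : Cfg n m) (y : Cfg n m)
    (hy1 : y.1 = Function.update x.1 ⟨0, by omega⟩ (FC hn hm x))
    (hy2 : y.2 = Function.update x.2 ⟨0, by omega⟩ (FC hn hm x)) :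
    Step (FC hn hm) x y := by
  have : y = (Function.update x.1 ⟨0, by omega⟩ (FC hn hm x),
      Function.update x.2 ⟨0, by omega⟩ (FC hn hm x)) := Prod.ext hy1 hy2
  rw [this]; exact Step.center x _ _ rfl rfl

/-- ascending flood of the left cycle: everything becomes the value of cell 0 -/
lemma flood_left (x : Cfg n m) :
    Reach hn hm x ((fun _ => x.1 ⟨0, by omega⟩), x.2) := by
  have key : ∀ k, k ≤ n - 1 →
      Reach hn hm x ((fun i => if i.val ≤ k then x.1 ⟨0, by omega⟩ else x.1 i), x.2) := by
    intro k
    induction k with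
    | zero =>
      intro _
      have h : ((fun i : Fin n => if i.val ≤ 0 then x.1 ⟨0, by omega⟩ else x.1 i), x.2) = x := by
        refine Prod.ext ?_ rfl
        funext i
        simp only
        split_ifs with h
        · exact fin_congr' x.1 _ i (by omega)
        · rfl
      rw [h]
    | succ k ih =>
      intro hk
      refine (ih (by omega)).tail ?_
      have hlt : k + 1 < n := by omega
      refine step_left_to hn hm _ ⟨k+1, hlt⟩ (by simp) _ rfl ?_
      funext i
      simp only [Function.update_apply, Fin.ext_iff]
      rcases i with ⟨iv, hiv⟩
      simp only
      split_ifs with h1 h2 h2 <;>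
        first | rfl | (exfalso; omega) | (exact fin_congr _ _ _ (by omega))
  have h := key (n-1) le_rfl
  have e : ((fun i : Fin n => if i.val ≤ n - 1 then x.1 ⟨0, by omega⟩ else x.1 i), x.2)
      = ((fun _ : Fin n => x.1 ⟨0, by omega⟩), x.2) := by
    refine Prod.ext ?_ rfl
    funext i
    simp only
    rw [if_pos (by have := i.isLt; omega)]
  rw [e] at h
  exact h

/-- ascending flood of the right cycle -/
lemma flood_right (x : Cfg n m) :
    Reach hn hm x (x.1, (fun _ => x.2 ⟨0, by omega⟩)) := by
  have key : ∀ k, k ≤ m - 1 →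
      Reach hn hm x (x.1, (fun j => if j.val ≤ k then x.2 ⟨0, by omega⟩ else x.2 j)) := by
    intro k
    induction k with
    | zero =>
      intro _
      have h : (x.1, (fun j : Fin m => if j.val ≤ 0 then x.2 ⟨0, by omega⟩ else x.2 j)) = x := by
        refine Prod.ext rfl ?_
        funext j
        simp only
        split_ifs with h
        · exact fin_congr' x.2 _ j (by omega)
        · rfl
      rw [h]
    | succ k ih =>
      intro hk
      refine (ih (by omega)).tail ?_
      have hlt : k + 1 < m := by omega
      refine step_right_to hn hm _ ⟨k+1, hlt⟩ (by simp) _ rfl ?_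
      funext j
      simp only [Function.update_apply, Fin.ext_iff]
      rcases j with ⟨jv, hjv⟩
      simp only
      split_ifs with h1 h2 h2 <;>
        first | rfl | (exfalso; omega) | (exact fin_congr _ _ _ (by omega))
  have h := key (m-1) le_rfl
  have e : (x.1, (fun j : Fin m => if j.val ≤ m - 1 then x.2 ⟨0, by omega⟩ else x.2 j))
      = (x.1, (fun _ : Fin m => x.2 ⟨0, by omega⟩)) := by
    refine Prod.ext rfl ?_
    funext j
    simp only
    rw [if_pos (by have := j.isLt; omega)]
  rw [e] at h
  exact h

/-- full descending shift of the left cycle -/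
lemma shift_left (x : Cfg n m) :
    Reach hn hm x
      ((fun i => if i.val = 0 then x.1 i else x.1 ⟨i.val - 1, by have := i.isLt; omega⟩), x.2) := by
  have key : ∀ j, j ≤ n - 1 →
      Reach hn hm x ((fun i => if n - 1 - j < i.val
        then x.1 ⟨i.val - 1, by have := i.isLt; omega⟩ else x.1 i), x.2) := by
    intro j
    induction j with
    | zero =>
      intro _
      have h : ((fun i : Fin n => if n - 1 - 0 < i.val
          then x.1 ⟨i.val - 1, by have := i.isLt; omega⟩ else x.1 i), x.2) = x := by
        refine Prod.ext ?_ rfl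
        funext i
        simp only
        split_ifs with h
        · exfalso; have := i.isLt; omega
        · rfl
      rw [h]
    | succ j ih =>
      intro hk
      refine (ih (by omega)).tail ?_
      have hlt : n - 1 - j < n := by omega
      refine step_left_to hn hm _ ⟨n - 1 - j, hlt⟩ (by simp; omega) _ rfl ?_
      funext i
      simp only [Function.update_apply, Fin.ext_iff]
      rcases i with ⟨iv, hiv⟩
      simp only
      split_ifs with h1 h2 h2 <;>
        first | rfl | (exfalso; omega) | (exact fin_congr _ _ _ (by omega))
  have h := key (n-1) le_rfl
  have e : ((fun i : Fin n => if n - 1 - (n-1) < i.val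
        then x.1 ⟨i.val - 1, by have := i.isLt; omega⟩ else x.1 i), x.2)
      = ((fun i : Fin n => if i.val = 0 then x.1 i
          else x.1 ⟨i.val - 1, by have := i.isLt; omega⟩), x.2) := by
    refine Prod.ext ?_ rfl
    funext i
    simp only
    rcases i with ⟨iv, hiv⟩
    simp only
    split_ifs with h1 h2 h2 <;> first | rfl | (exfalso; omega)
  rw [e] at h
  exact h

/-- full descending shift of the right cycle -/
lemma shift_right (x : Cfg n m) :
    Reach hn hm x
      (x.1, (fun j => if j.val = 0 then x.2 j else x.2 ⟨j.val - 1, by have := j.isLt; omega⟩)) := by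
  have key : ∀ k, k ≤ m - 1 →
      Reach hn hm x (x.1, (fun j => if m - 1 - k < j.val
        then x.2 ⟨j.val - 1, by have := j.isLt; omega⟩ else x.2 j)) := by
    intro k
    induction k with
    | zero =>
      intro _
      have h : (x.1, (fun j : Fin m => if m - 1 - 0 < j.val
          then x.2 ⟨j.val - 1, by have := j.isLt; omega⟩ else x.2 j)) = x := by
        refine Prod.ext rfl ?_
        funext j
        simp only
        split_ifs with h
        · exfalso; have := j.isLt; omega
        · rfl
      rw [h]
    | succ k ih =>
      intro hk
      refine (ih (by omega)).tail ?_
      have hlt : m - 1 - k < m := by omega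
      refine step_right_to hn hm _ ⟨m - 1 - k, hlt⟩ (by simp; omega) _ rfl ?_
      funext j
      simp only [Function.update_apply, Fin.ext_iff]
      rcases j with ⟨jv, hjv⟩
      simp only
      split_ifs with h1 h2 h2 <;>
        first | rfl | (exfalso; omega) | (exact fin_congr _ _ _ (by omega))
  have h := key (m-1) le_rfl
  have e : (x.1, (fun j : Fin m => if m - 1 - (m-1) < j.val
        then x.2 ⟨j.val - 1, by have := j.isLt; omega⟩ else x.2 j))
      = (x.1, (fun j : Fin m => if j.val = 0 then x.2 j
          else x.2 ⟨j.val - 1, by have := j.isLt; omega⟩)) := by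
    refine Prod.ext rfl ?_
    funext j
    simp only
    rcases j with ⟨jv, hjv⟩
    simp only
    split_ifs with h1 h2 h2 <;> first | rfl | (exfalso; omega)
  rw [e] at h
  exact h

end
end DCaux
namespace DCaux
variable {n m : ℕ}

def Cst (v : Bool) : Cfg n m := ((fun _ => v), (fun _ => v))

def Sg (y : Cfg n m) : Cfg n m :=
  ((fun i => xor (y.1 i) (decide (i.val % 2 = 0))),
   (fun j => xor (y.2 j) (decide (j.val % 2 = 0))))

lemma Sg_Sg (y : Cfg n m) : Sg (Sg y) = y := by
  unfold Sg
  refine Prod.ext ?_ ?_ <;> funext k <;> simp [Bool.xor_assoc]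

def Vld (hn : 2 ≤ n) (hm : 2 ≤ m) (x : Cfg n m) : Prop :=
  x.1 ⟨0, by omega⟩ = x.2 ⟨0, by omega⟩

section
variable (hn : 2 ≤ n) (hm : 2 ≤ m)

lemma vld_sg {x : Cfg n m} (hx : Vld hn hm x) : Vld hn hm (Sg x) := by
  unfold Vld Sg at *
  simp [hx]

lemma reach_const (x : Cfg n m) : Reach hn hm x (Cst (FC hn hm x)) := by
  have h1 : Reach hn hm x (Function.update x.1 ⟨0, by omega⟩ (FC hn hm x),
      Function.update x.2 ⟨0, by omega⟩ (FC hn hm x)) :=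
    Relation.ReflTransGen.single (Step.center x ⟨0, by omega⟩ ⟨0, by omega⟩ rfl rfl)
  obtain ⟨A, hA⟩ : ∃ A : Cfg n m, (Function.update x.1 ⟨0, by omega⟩ (FC hn hm x),
      Function.update x.2 ⟨0, by omega⟩ (FC hn hm x)) = A := ⟨_, rfl⟩
  rw [hA] at h1
  have h2 := flood_left hn hm A
  have h3 := flood_right hn hm ((fun _ : Fin n => A.1 ⟨0, by omega⟩), A.2)
  have e1 : A.1 ⟨0, by omega⟩ = FC hn hm x := by rw [← hA]; simp
  have e2 : A.2 ⟨0, by omega⟩ = FC hn hm x := by rw [← hA]; simp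
  have efin : (((fun _ : Fin n => A.1 ⟨0, by omega⟩), A.2).1,
      (fun _ : Fin m => ((fun _ : Fin n => A.1 ⟨0, by omega⟩), A.2).2 ⟨0, by omega⟩))
      = Cst (FC hn hm x) := by
    refine Prod.ext ?_ ?_
    · funext i; simp only [Cst]; exact e1
    · funext j; simp only [Cst]; exact e2
  rw [efin] at h3
  exact h1.trans (h2.trans h3)

lemma FC_cst (v : Bool) : FC hn hm (Cst (n := n) (m := m) v) = !v := by
  simp [FC, Cst]

lemma reach_C0 (x : Cfg n m) : Reach hn hm x (Cst false) := by
  cases h : FC hn hm x with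
  | false =>
    have h1 := reach_const hn hm x
    rwa [h] at h1
  | true =>
    have h1 := reach_const hn hm x
    rw [h] at h1
    have h2 := reach_const hn hm (Cst (n := n) (m := m) true)
    rw [FC_cst] at h2
    exact h1.trans h2

lemma vld_step {a b : Cfg n m} (h : Step (FC hn hm) a b) (ha : Vld hn hm a) : Vld hn hm b := by
  cases h with
  | left i hi =>
    unfold Vld at *
    simp only [Function.update_apply]
    rw [if_neg (by intro he; rw [Fin.ext_iff] at he; simp at he; omega)]
    exact ha
  | right j hj =>
    unfold Vld at *
    simp only [Function.update_apply]
    rw [if_neg (by intro he; rw [Fin.ext_iff] at he; simp at he; omega)]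
    exact ha
  | center i j hi hj =>
    unfold Vld at *
    simp only [Function.update_apply]
    rw [if_pos (by rw [Fin.ext_iff]; simp; omega), if_pos (by rw [Fin.ext_iff]; simp; omega)]

lemma anti (hne : n % 2 = 0) (hme : m % 2 = 0) {a b : Cfg n m} (ha : Vld hn hm a)
    (h : Step (FC hn hm) a b) : b = a ∨ Step (FC hn hm) (Sg b) (Sg a) := by
  have h0n : 0 < n := by omega
  have h0m : 0 < m := by omega
  cases h with
  | left i hi =>
    by_cases ht : a.1 i = a.1 ⟨i.val - 1, by have := i.isLt; omega⟩
    · left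
      refine Prod.ext ?_ rfl
      funext k
      simp only [Function.update_apply]
      split_ifs with hk
      · rw [hk]; exact ht.symm
      · rfl
    · right
      refine step_left_to hn hm _ i hi _ rfl ?_
      funext k
      simp only [Function.update_apply]
      split_ifs with hk
      · -- k = i
        subst hk
        have hne' : (⟨k.val - 1, by have := k.isLt; omega⟩ : Fin n) ≠ k := by
          intro he; rw [Fin.ext_iff] at he; simp at he; omega
        have hx' : a.1 ⟨k.val - 1, by have := k.isLt; omega⟩ = !(a.1 k) := by
          rcases Bool.eq_false_or_eq_true (a.1 k) with h1 | h1 <;>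
            rcases Bool.eq_false_or_eq_true (a.1 ⟨k.val - 1, by have := k.isLt; omega⟩) with h2 | h2 <;>
            simp_all
        have hpar : decide ((k.val - 1) % 2 = 0) = !decide (k.val % 2 = 0) := by
          rcases Nat.mod_two_eq_zero_or_one k.val with hp | hp <;>
            simp [hp, show ((k.val - 1) % 2 = 0) ↔ ¬(k.val % 2 = 0) from by omega]
        simp only [Sg, Function.update_apply, if_neg hne', hx', hpar]
        rcases Bool.eq_false_or_eq_true (a.1 k) with h1 | h1 <;>
          rcases Bool.eq_false_or_eq_true (decide (k.val % 2 = 0)) with h2 | h2 <;>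
          simp [h1, h2]
      · simp only [Sg, Function.update_apply, if_neg hk]
  | right j hj =>
    by_cases ht : a.2 j = a.2 ⟨j.val - 1, by have := j.isLt; omega⟩
    · left
      refine Prod.ext rfl ?_
      funext k
      simp only [Function.update_apply]
      split_ifs with hk
      · rw [hk]; exact ht.symm
      · rfl
    · right
      refine step_right_to hn hm _ j hj _ rfl ?_
      funext k
      simp only [Function.update_apply]
      split_ifs with hk
      · subst hk
        have hne' : (⟨k.val - 1, by have := k.isLt; omega⟩ : Fin m) ≠ k := by
          intro he; rw [Fin.ext_iff] at he; simp at he; omega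
        have hx' : a.2 ⟨k.val - 1, by have := k.isLt; omega⟩ = !(a.2 k) := by
          rcases Bool.eq_false_or_eq_true (a.2 k) with h1 | h1 <;>
            rcases Bool.eq_false_or_eq_true (a.2 ⟨k.val - 1, by have := k.isLt; omega⟩) with h2 | h2 <;>
            simp_all
        have hpar : decide ((k.val - 1) % 2 = 0) = !decide (k.val % 2 = 0) := by
          rcases Nat.mod_two_eq_zero_or_one k.val with hp | hp <;>
            simp [hp, show ((k.val - 1) % 2 = 0) ↔ ¬(k.val % 2 = 0) from by omega]
        simp only [Sg, Function.update_apply, if_neg hne', hx', hpar]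
        rcases Bool.eq_false_or_eq_true (a.2 k) with h1 | h1 <;>
          rcases Bool.eq_false_or_eq_true (decide (k.val % 2 = 0)) with h2 | h2 <;>
          simp [h1, h2]
      · simp only [Sg, Function.update_apply, if_neg hk]
  | center i j hi hj =>
    obtain rfl : (⟨0, h0n⟩ : Fin n) = i := by rw [Fin.ext_iff]; simpa using hi.symm
    obtain rfl : (⟨0, h0m⟩ : Fin m) = j := by rw [Fin.ext_iff]; simpa using hj.symm
    have ha' : a.1 ⟨0, by omega⟩ = a.2 ⟨0, by omega⟩ := ha
    by_cases ht : FC hn hm a = a.1 ⟨0, by omega⟩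
    · left
      refine Prod.ext ?_ ?_ <;> funext k <;> simp only [Function.update_apply] <;> split_ifs with hk
      · rw [hk]; exact ht
      · rfl
      · rw [hk]; exact ht.trans ha'
      · rfl
    · right
      have hb1 : ∀ v : Bool, Function.update a.1 ⟨0, h0n⟩ v ⟨n - 1, by omega⟩
          = a.1 ⟨n - 1, by omega⟩ := by
        intro v
        simp only [Function.update_apply]
        rw [if_neg (by intro he; rw [Fin.ext_iff] at he; simp at he; omega)]
      have hb2 : ∀ v : Bool, Function.update a.2 ⟨0, h0m⟩ v ⟨m - 1, by omega⟩
          = a.2 ⟨m - 1, by omega⟩ := by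
        intro v
        simp only [Function.update_apply]
        rw [if_neg (by intro he; rw [Fin.ext_iff] at he; simp at he; omega)]
      have hfc : FC hn hm (Sg (Function.update a.1 ⟨0, h0n⟩ (FC hn hm a),
          Function.update a.2 ⟨0, h0m⟩ (FC hn hm a))) = FC hn hm a := by
        simp only [FC, Sg]
        rw [decide_eq_false (show ¬((n-1) % 2 = 0) from by omega),
            decide_eq_false (show ¬((m-1) % 2 = 0) from by omega)]
        simp only [Bool.xor_false]
        rw [hb1, hb2]
      refine step_center_to hn hm _ _ ?_ ?_
      · rw [hfc]
        funext k
        rw [Function.update_apply]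
        split_ifs with hk
        · have hk0 : k.val = 0 := by rw [Fin.ext_iff] at hk; simpa using hk
          have hsg : (Sg a).1 k = !(a.1 ⟨0, by omega⟩) := by
            simp only [Sg]
            rw [show a.1 k = a.1 ⟨0, by omega⟩ from (fin_congr' a.1 (by omega) k hk0).symm]
            simp [hk0]
          rw [hsg]
          rcases Bool.eq_false_or_eq_true (FC hn hm a) with h1 | h1 <;>
            rcases Bool.eq_false_or_eq_true (a.1 ⟨0, by omega⟩) with h2 | h2 <;>
            simp_all
        · simp only [Sg, Function.update_apply, if_neg hk]
      · rw [hfc]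
        funext k
        rw [Function.update_apply]
        split_ifs with hk
        · have hk0 : k.val = 0 := by rw [Fin.ext_iff] at hk; simpa using hk
          have hsg : (Sg a).2 k = !(a.2 ⟨0, by omega⟩) := by
            simp only [Sg]
            rw [show a.2 k = a.2 ⟨0, by omega⟩ from (fin_congr' a.2 (by omega) k hk0).symm]
            simp [hk0]
          rw [hsg]
          have ht2 : FC hn hm a ≠ a.2 ⟨0, by omega⟩ := by rw [← ha']; exact ht
          rcases Bool.eq_false_or_eq_true (FC hn hm a) with h1 | h1 <;>
            rcases Bool.eq_false_or_eq_true (a.2 ⟨0, by omega⟩) with h2 | h2 <;>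
            simp_all
        · simp only [Sg, Function.update_apply, if_neg hk]

lemma anti_path (hne : n % 2 = 0) (hme : m % 2 = 0) {a b : Cfg n m}
    (h : Reach hn hm a b) (ha : Vld hn hm a) : Reach hn hm (Sg b) (Sg a) := by
  induction h using Relation.ReflTransGen.head_induction_on with
  | refl => exact Relation.ReflTransGen.refl
  | head hstep htail ih =>
    rename_i a' c
    rcases anti hn hm hne hme ha hstep with he | hs
    · rw [← he]
      exact ih (he ▸ ha)
    · exact (ih (vld_step hn hm hstep ha)).tail hs

end
end DCaux
namespace DCaux
variable {n m : ℕ}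

def Pst (r : ℕ) : Cfg n m :=
  ((fun _ => decide (r % 2 = 1)),
   (fun j => if j.val = 0 then decide (r % 2 = 1)
             else decide (j.val ≤ r ∧ (r - j.val) % 2 = 0)))

def Sst (s : ℕ) : Cfg n m :=
  ((fun i => if i.val = 0 then decide (s % 2 = 1)
             else if i.val ≤ s then decide (s % 2 = i.val % 2) else false),
   (fun j => if j.val = 0 then decide (s % 2 = 1) else decide (s % 2 = j.val % 2)))

def Wst : Cfg n m := ((fun i => decide (i.val % 2 = 0)), (fun j => decide (j.val % 2 = 0)))

section
variable (hn : 2 ≤ n) (hm : 2 ≤ m)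

lemma fc_P (r : ℕ) (hr : r + 1 ≤ m - 2) :
    FC hn hm (Pst (n := n) (m := m) r) = decide ((r+1) % 2 = 1) := by
  simp only [FC, Pst]
  rw [if_neg (by omega)]
  rw [decide_eq_false (show ¬((m-1:ℕ) ≤ r ∧ (r - (m-1)) % 2 = 0) from by omega)]
  rcases Nat.mod_two_eq_zero_or_one r with hp | hp
  · rw [decide_eq_false (by omega), decide_eq_true (by omega)]
    rfl
  · rw [decide_eq_true (by omega : r % 2 = 1), decide_eq_false (by omega)]
    rfl

lemma fc_S (hne : n % 2 = 0) (hme : m % 2 = 0) (s : ℕ) :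
    FC hn hm (Sst (n := n) (m := m) s) = decide ((s+1) % 2 = 1) := by
  simp only [FC, Sst]
  rw [if_neg (show ¬((n-1:ℕ) = 0) from by omega), if_neg (show ¬((m-1:ℕ) = 0) from by omega)]
  rcases Nat.mod_two_eq_zero_or_one s with hp | hp
  · rw [decide_eq_false (show ¬(s % 2 = (m-1) % 2) from by omega),
      decide_eq_false (show ¬(s % 2 = (n-1) % 2) from by omega),
      decide_eq_true (show (s+1) % 2 = 1 from by omega)]
    simp
  · rw [decide_eq_true (show s % 2 = (m-1) % 2 from by omega),
      decide_eq_false (show ¬((s+1) % 2 = 1) from by omega)]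
    simp

lemma TP (r : ℕ) (hr : r + 1 ≤ m - 2) :
    Reach hn hm (Pst r) (Pst (r+1)) := by
  have h0n : 0 < n := by omega
  have h0m : 0 < m := by omega
  have hfc := fc_P hn hm r hr
  have h1 : Reach hn hm (Pst r)
      (Function.update (Pst (n := n) (m := m) r).1 ⟨0, h0n⟩ (FC hn hm (Pst r)),
       Function.update (Pst (n := n) (m := m) r).2 ⟨0, h0m⟩ (FC hn hm (Pst r))) :=
    Relation.ReflTransGen.single (Step.center _ ⟨0, h0n⟩ ⟨0, h0m⟩ rfl rfl)
  have h2 := flood_left hn hm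
      (Function.update (Pst (n := n) (m := m) r).1 ⟨0, h0n⟩ (FC hn hm (Pst r)),
       Function.update (Pst (n := n) (m := m) r).2 ⟨0, h0m⟩ (FC hn hm (Pst r)))
  have h3 := shift_right hn hm
      ((fun _ : Fin n => (Function.update (Pst (n := n) (m := m) r).1 ⟨0, h0n⟩
          (FC hn hm (Pst r)), Function.update (Pst (n := n) (m := m) r).2 ⟨0, h0m⟩
          (FC hn hm (Pst r))).1 ⟨0, by omega⟩),
       (Function.update (Pst (n := n) (m := m) r).2 ⟨0, h0m⟩ (FC hn hm (Pst r))))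
  refine (h1.trans (h2.trans ?_))
  have efin : ∀ z : Cfg n m,
      z = ((fun _ : Fin n => (Function.update (Pst (n := n) (m := m) r).1 ⟨0, h0n⟩
          (FC hn hm (Pst r)), Function.update (Pst (n := n) (m := m) r).2 ⟨0, h0m⟩
          (FC hn hm (Pst r))).1 ⟨0, by omega⟩),
       (Function.update (Pst (n := n) (m := m) r).2 ⟨0, h0m⟩ (FC hn hm (Pst r)))) →
      Reach hn hm z (Pst (r+1)) := by
    intro z hz
    subst hz
    have e : ((((fun _ : Fin n => (Function.update (Pst (n := n) (m := m) r).1 ⟨0, h0n⟩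
          (FC hn hm (Pst r)), Function.update (Pst (n := n) (m := m) r).2 ⟨0, h0m⟩
          (FC hn hm (Pst r))).1 ⟨0, by omega⟩), (Function.update (Pst (n := n) (m := m) r).2
          ⟨0, h0m⟩ (FC hn hm (Pst r)))) : Cfg n m).1,
        (fun j : Fin m => if j.val = 0
          then (Function.update (Pst (n := n) (m := m) r).2 ⟨0, h0m⟩ (FC hn hm (Pst r))) j
          else (Function.update (Pst (n := n) (m := m) r).2 ⟨0, h0m⟩ (FC hn hm (Pst r)))
            ⟨j.val - 1, by have := j.isLt; omega⟩))
        = Pst (r+1) := by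
      refine Prod.ext ?_ ?_
      · funext i
        simp only [Function.update_apply]
        rw [hfc]
        simp only [Pst, Fin.mk.injEq]
        split_ifs <;>
          first
          | rfl
          | (exfalso; omega)
          | (exact decide_eq_decide.mpr (by omega))
          | (exact (decide_eq_decide.mpr (by omega)).symm)
          | (exact decide_eq_false (by omega))
          | (exact (decide_eq_false (by omega)).symm)
          | (exact decide_eq_true (by omega))
          | (exact (decide_eq_true (by omega)).symm)
          | (exact ((decide_eq_false (by omega)).trans (decide_eq_false (by omega)).symm))
      · funext j
        rcases j with ⟨jv, hjv⟩
        simp only [Function.update_apply]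
        rw [hfc]
        simp only [Pst, Fin.mk.injEq]
        split_ifs <;>
          first
          | rfl
          | (exfalso; omega)
          | (exact decide_eq_decide.mpr (by omega))
          | (exact (decide_eq_decide.mpr (by omega)).symm)
          | (exact decide_eq_false (by omega))
          | (exact (decide_eq_false (by omega)).symm)
          | (exact decide_eq_true (by omega))
          | (exact (decide_eq_true (by omega)).symm)
          | (exact ((decide_eq_false (by omega)).trans (decide_eq_false (by omega)).symm))
    exact e ▸ h3
  exact efin _ rfl

lemma TS (hne : n % 2 = 0) (hme : m % 2 = 0) (s : ℕ) :
    Reach hn hm (Sst s) (Sst (s+1)) := by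
  have h0n : 0 < n := by omega
  have h0m : 0 < m := by omega
  have hfc := fc_S hn hm hne hme s
  have h1 : Reach hn hm (Sst s)
      (Function.update (Sst (n := n) (m := m) s).1 ⟨0, h0n⟩ (FC hn hm (Sst s)),
       Function.update (Sst (n := n) (m := m) s).2 ⟨0, h0m⟩ (FC hn hm (Sst s))) :=
    Relation.ReflTransGen.single (Step.center _ ⟨0, h0n⟩ ⟨0, h0m⟩ rfl rfl)
  have h2 := shift_left hn hm
      (Function.update (Sst (n := n) (m := m) s).1 ⟨0, h0n⟩ (FC hn hm (Sst s)),
       Function.update (Sst (n := n) (m := m) s).2 ⟨0, h0m⟩ (FC hn hm (Sst s)))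
  refine h1.trans (h2.trans ?_)
  set B : Cfg n m :=
      (Function.update (Sst (n := n) (m := m) s).1 ⟨0, h0n⟩ (FC hn hm (Sst s)),
       Function.update (Sst (n := n) (m := m) s).2 ⟨0, h0m⟩ (FC hn hm (Sst s))) with hB
  have h3 := shift_right hn hm
      ((fun i : Fin n => if i.val = 0 then B.1 i
          else B.1 ⟨i.val - 1, by have := i.isLt; omega⟩), B.2)
  refine h3.trans ?_
  have e : ((((fun i : Fin n => if i.val = 0 then B.1 i
          else B.1 ⟨i.val - 1, by have := i.isLt; omega⟩), B.2) : Cfg n m).1,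
      (fun j : Fin m => if j.val = 0
        then (((fun i : Fin n => if i.val = 0 then B.1 i
          else B.1 ⟨i.val - 1, by have := i.isLt; omega⟩), B.2) : Cfg n m).2 j
        else (((fun i : Fin n => if i.val = 0 then B.1 i
          else B.1 ⟨i.val - 1, by have := i.isLt; omega⟩), B.2) : Cfg n m).2
            ⟨j.val - 1, by have := j.isLt; omega⟩))
      = Sst (s+1) := by
    refine Prod.ext ?_ ?_
    · funext i
      rcases i with ⟨iv, hiv⟩
      simp only [hB, Function.update_apply]
      rw [hfc]
      simp only [Sst, Fin.mk.injEq]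
      split_ifs <;>
        first
          | rfl
          | (exfalso; omega)
          | (exact decide_eq_decide.mpr (by omega))
          | (exact (decide_eq_decide.mpr (by omega)).symm)
          | (exact decide_eq_false (by omega))
          | (exact (decide_eq_false (by omega)).symm)
          | (exact decide_eq_true (by omega))
          | (exact (decide_eq_true (by omega)).symm)
          | (exact ((decide_eq_false (by omega)).trans (decide_eq_false (by omega)).symm))
    · funext j
      rcases j with ⟨jv, hjv⟩
      simp only [hB, Function.update_apply]
      rw [hfc]
      simp only [Sst, Fin.mk.injEq]
      split_ifs <;>
        first
          | rfl
          | (exfalso; omega)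
          | (exact decide_eq_decide.mpr (by omega))
          | (exact (decide_eq_decide.mpr (by omega)).symm)
          | (exact decide_eq_false (by omega))
          | (exact (decide_eq_false (by omega)).symm)
          | (exact decide_eq_true (by omega))
          | (exact (decide_eq_true (by omega)).symm)
          | (exact ((decide_eq_false (by omega)).trans (decide_eq_false (by omega)).symm))
  exact e ▸ Relation.ReflTransGen.refl

lemma reach_W (hne : n % 2 = 0) (hme : m % 2 = 0) :
    Reach hn hm (Cst false) (Wst (n := n) (m := m)) := by
  have h0n : 0 < n := by omega
  have h0m : 0 < m := by omega
  have hP0 : (Pst 0 : Cfg n m) = Cst false := by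
    refine Prod.ext ?_ ?_ <;> funext k <;> rcases k with ⟨kv, hkv⟩ <;>
      simp only [Pst, Cst] <;> (try split_ifs) <;>
      first | rfl | (exfalso; omega) | (exact decide_eq_false (by omega))
  have hPreach : ∀ r, r ≤ m - 2 → Reach hn hm (Cst false) (Pst r) := by
    intro r
    induction r with
    | zero => intro _; rw [← hP0]
    | succ r ih =>
      intro hr
      exact (ih (by omega)).trans (TP hn hm r hr)
  have hPS : (Pst (m-2) : Cfg n m) = Sst 0 := by
    refine Prod.ext ?_ ?_ <;> funext k <;> rcases k with ⟨kv, hkv⟩ <;>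
      simp only [Pst, Sst] <;> (try split_ifs) <;>
      first
        | rfl
        | (exfalso; omega)
        | (exact decide_eq_decide.mpr (by omega))
        | (exact (decide_eq_decide.mpr (by omega)).symm)
        | (exact decide_eq_false (by omega))
        | (exact (decide_eq_false (by omega)).symm)
        | (exact decide_eq_true (by omega))
        | (exact (decide_eq_true (by omega)).symm)
        | (exact ((decide_eq_false (by omega)).trans (decide_eq_false (by omega)).symm))
  have hS : ∀ s, Reach hn hm (Cst false) (Sst s) := by
    intro s
    induction s with
    | zero =>
      have := hPreach (m-2) le_rfl
      rwa [hPS] at this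
    | succ s ih => exact ih.trans (TS hn hm hne hme s)
  have hfin := hS (n + m)
  refine hfin.tail ?_
  have hfc := fc_S hn hm hne hme (n + m)
  refine step_center_to hn hm _ _ ?_ ?_
  · funext i
    rcases i with ⟨iv, hiv⟩
    simp only [Function.update_apply]
    rw [hfc]
    simp only [Sst, Wst, Fin.mk.injEq]
    split_ifs <;>
      first
          | rfl
          | (exfalso; omega)
          | (exact decide_eq_decide.mpr (by omega))
          | (exact (decide_eq_decide.mpr (by omega)).symm)
          | (exact decide_eq_false (by omega))
          | (exact (decide_eq_false (by omega)).symm)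
          | (exact decide_eq_true (by omega))
          | (exact (decide_eq_true (by omega)).symm)
          | (exact ((decide_eq_false (by omega)).trans (decide_eq_false (by omega)).symm))
  · funext j
    rcases j with ⟨jv, hjv⟩
    simp only [Function.update_apply]
    rw [hfc]
    simp only [Sst, Wst, Fin.mk.injEq]
    split_ifs <;>
      first
          | rfl
          | (exfalso; omega)
          | (exact decide_eq_decide.mpr (by omega))
          | (exact (decide_eq_decide.mpr (by omega)).symm)
          | (exact decide_eq_false (by omega))
          | (exact (decide_eq_false (by omega)).symm)
          | (exact decide_eq_true (by omega))
          | (exact (decide_eq_true (by omega)).symm)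
          | (exact ((decide_eq_false (by omega)).trans (decide_eq_false (by omega)).symm))

lemma main1 (hne : n % 2 = 0) (hme : m % 2 = 0) (x y : Cfg n m)
    (hx : Vld hn hm x) (hy : Vld hn hm y) : Reach hn hm x y := by
  have hW : Sg (Cst false : Cfg n m) = Wst := by
    refine Prod.ext ?_ ?_ <;> funext k <;> simp [Sg, Cst, Wst]
  have h4 := anti_path hn hm hne hme (reach_C0 hn hm (Sg y)) (vld_sg hn hm hy)
  rw [Sg_Sg, hW] at h4
  exact (reach_C0 hn hm x).trans ((reach_W hn hm hne hme).trans h4)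

lemma card_valid :
    Fintype.card {p : Cfg n m // p.1 ⟨0, by omega⟩ = p.2 ⟨0, by omega⟩} = 2 ^ (n + m - 1) := by
  have e : {p : Cfg n m // p.1 ⟨0, by omega⟩ = p.2 ⟨0, by omega⟩}
      ≃ ((Fin n → Bool) × (Fin (m-1) → Bool)) :=
    { toFun := fun p => (p.1.1, fun j => p.1.2 ⟨j.val + 1, by have := j.isLt; omega⟩)
      invFun := fun q => ⟨(q.1, fun j => if j.val = 0 then q.1 ⟨0, by omega⟩
          else q.2 ⟨j.val - 1, by have := j.isLt; omega⟩), by simp⟩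
      left_inv := by
        intro p
        apply Subtype.ext
        refine Prod.ext rfl ?_
        funext j
        simp only
        split_ifs with h
        · exact p.2.trans (fin_congr' p.1.2 (by omega) j h)
        · exact fin_congr' p.1.2 (by have := j.isLt; omega) j (by omega)
      right_inv := by
        intro q
        refine Prod.ext rfl ?_
        funext j
        simp only
        rw [if_neg (by simp)]
        exact fin_congr' q.2 (by have := j.isLt; omega) j (by omega) }
  rw [Fintype.card_congr e, Fintype.card_prod, Fintype.card_fun, Fintype.card_fun,
    Fintype.card_bool, Fintype.card_fin, Fintype.card_fin, ← pow_add]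
  congr 1
  omega

end
end DCaux

/-- In a canonical negative double-cycle with both cycle sizes even, every
configuration is reachable from every other one; the asynchronous transition
graph has a single terminal SCC containing all 2^{n+m-1} configurations. -/
theorem stmt14 (n m : ℕ) (hn : 2 ≤ n) (hm : 2 ≤ m)
    (hne : n % 2 = 0) (hme : m % 2 = 0) :
    (∀ x y : Cfg n m,
      x.1 ⟨0, by omega⟩ = x.2 ⟨0, by omega⟩ →
      y.1 ⟨0, by omega⟩ = y.2 ⟨0, by omega⟩ →
      Relation.ReflTransGen
        (Step (fun z : Cfg n m => !(z.1 ⟨n - 1, by omega⟩) && !(z.2 ⟨m - 1, by omega⟩)))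
        x y) ∧
    Fintype.card {p : Cfg n m // p.1 ⟨0, by omega⟩ = p.2 ⟨0, by omega⟩}
      = 2 ^ (n + m - 1) := by
  constructor
  · intro x y hx hy
    exact DCaux.main1 hn hm hne hme x y hx hy
  · exact DCaux.card_valid (hn := hn) (hm := hm)
end
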